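/- Let μ₁ ∈ ℂ and μ₂ ∈ ℝ with |μ₁| ≤ κ < 1 and |μ₂| ≤ κ. Define ν₁ = μ₁ (1 − μ₂²)/(1 − |μ₁|² μ₂²) and ν₂ = μ₂ (1 − |μ₁|²)/(1 − |μ₁|² μ₂²). Then |ν₁| + |ν₂| = (|μ₁| + |μ₂|)/(1 + |μ₁|·|μ₂|) ≤ 2κ/(1 + κ²) < 1. -/

import Mathlib

theorem nu_coeff_bound (μ1 : ℂ) (μ2 κ : ℝ)
    (hκ : κ < 1) (h1 : ‖μ1‖ ≤ κ) (h2 : |μ2| ≤ κ)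
    (ν1 : ℂ) (ν2 : ℝ)
    (hν1 : ν1 = μ1 * ((1 - μ2 ^ 2 : ℝ) / (1 - ‖μ1‖ ^ 2 * μ2 ^ 2) : ℝ))
    (hν2 : ν2 = μ2 * (1 - ‖μ1‖ ^ 2) / (1 - ‖μ1‖ ^ 2 * μ2 ^ 2)) :
    ‖ν1‖ + |ν2| = (‖μ1‖ + |μ2|) / (1 + ‖μ1‖ * |μ2|) ∧
    (‖μ1‖ + |μ2|) / (1 + ‖μ1‖ * |μ2|) ≤ 2 * κ / (1 + κ ^ 2) ∧
    2 * κ / (1 + κ ^ 2) < 1 := by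
  set a := ‖μ1‖ with hadef
  set b := |μ2| with hbdef
  have ha : 0 ≤ a := norm_nonneg _
  have hb : 0 ≤ b := abs_nonneg _
  have hκ0 : 0 ≤ κ := le_trans ha h1
  have ha1 : a < 1 := lt_of_le_of_lt h1 hκ
  have hb1 : b < 1 := lt_of_le_of_lt h2 hκ
  have hb2 : μ2 ^ 2 = b ^ 2 := (sq_abs μ2).symm
  have hab1 : a * b < 1 := lt_of_le_of_lt (mul_le_of_le_one_right ha hb1.le) ha1
  have hD : 0 < 1 - a ^ 2 * b ^ 2 := by nlinarith [mul_nonneg ha hb]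
  have h1ab : 0 < 1 + a * b := by nlinarith
  have hv1 : ‖ν1‖ = a * ((1 - b ^ 2) / (1 - a ^ 2 * b ^ 2)) := by
    rw [hν1, norm_mul, Complex.norm_real, Real.norm_eq_abs, hb2, abs_of_nonneg]
    exact div_nonneg (by nlinarith) hD.le
  have hv2 : |ν2| = b * ((1 - a ^ 2) / (1 - a ^ 2 * b ^ 2)) := by
    rw [hν2, abs_div, abs_mul, ← hbdef, abs_of_nonneg (by nlinarith : (0:ℝ) ≤ 1 - a ^ 2),
      abs_of_nonneg (by nlinarith : (0:ℝ) ≤ 1 - a ^ 2 * μ2 ^ 2)]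
    rw [hb2]
    ring
  refine ⟨?_, ?_, ?_⟩
  · rw [hv1, hv2]
    field_simp
    ring
  · rw [div_le_div_iff₀ h1ab (by positivity)]
    nlinarith [mul_nonneg (sub_nonneg.2 h1) (by nlinarith : (0:ℝ) ≤ 1 - b * κ),
      mul_nonneg (sub_nonneg.2 h2) (by nlinarith : (0:ℝ) ≤ 1 - a * κ)]
  · rw [div_lt_one (by positivity)]
    nlinarith [sq_nonneg (1 - κ)]
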